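/- For λ ≠ −1/α with |λα| < 1 and α > 0, the variance of the degenerate zero-truncated Poisson random variable X_λ equals (α(1+α)/(1+αλ)²) · e_λ(α)/(e_λ(α)−1) − (α/(1+αλ))² · (e_λ(α)/(e_λ(α)−1))². -/

import Mathlib

open Real Filter Finset Topology

noncomputable def bc (p : ℝ) (n : ℕ) : ℝ :=
  (∏ j ∈ Finset.range n, (p - j)) / (Nat.factorial n : ℝ)

lemma bc_zero (p : ℝ) : bc p 0 = 1 := by simp [bc]

lemma bc_succ_ratio (p : ℝ) (n : ℕ) :
    ((n : ℝ) + 1) * bc p (n + 1) = (p - n) * bc p n := by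
  unfold bc
  rw [Finset.prod_range_succ, Nat.factorial_succ]
  have h1 : ((Nat.factorial n : ℝ)) ≠ 0 := Nat.cast_ne_zero.mpr (Nat.factorial_ne_zero n)
  have h2 : ((n : ℝ) + 1) ≠ 0 := by positivity
  push_cast
  field_simp

lemma abs_bc_le (p : ℝ) (n : ℕ) :
    |bc p n| ≤ (∏ j ∈ Finset.range n, (|p| + j + 1)) / (Nat.factorial n : ℝ) := by
  unfold bc
  rw [abs_div, abs_of_nonneg (by positivity : (0:ℝ) ≤ (Nat.factorial n : ℝ)),
    Finset.abs_prod]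
  gcongr with j hj
  calc |p - (j:ℝ)| ≤ |p| + |(j:ℝ)| := abs_sub _ _
    _ = |p| + j := by rw [abs_of_nonneg (by positivity : (0:ℝ) ≤ (j:ℝ))]
    _ ≤ |p| + j + 1 := by linarith


lemma tendsto_ratio_aux (c d : ℝ) :
    Tendsto (fun n : ℕ => ((n:ℝ) + c)/((n:ℝ) + d)) atTop (𝓝 1) := by
  have hd : Tendsto (fun n : ℕ => (n:ℝ) + d) atTop atTop :=
    tendsto_atTop_add_const_right _ d tendsto_natCast_atTop_atTop
  have h0 : Tendsto (fun n : ℕ => (c - d)/((n:ℝ) + d)) atTop (𝓝 0) :=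
    Tendsto.div_atTop tendsto_const_nhds hd
  have h1 : Tendsto (fun n : ℕ => 1 + (c - d)/((n:ℝ) + d)) atTop (𝓝 1) := by
    simpa using h0.const_add 1
  apply h1.congr'
  filter_upwards [hd.eventually_gt_atTop 0] with n hn
  field_simp
  ring

lemma summable_master (p r : ℝ) (hr0 : 0 < r) (hr1 : r < 1) :
    Summable (fun n : ℕ => |bc p n| * ((n : ℝ) + 1) * r ^ n) := by
  set v : ℕ → ℝ := fun n =>
    (∏ j ∈ Finset.range n, (|p| + j + 1)) / (Nat.factorial n : ℝ) * ((n:ℝ) + 2) * r ^ n with hv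
  have hvpos : ∀ n, 0 < v n := by
    intro n; rw [hv]; dsimp only
    have h1 : 0 < ∏ j ∈ Finset.range n, (|p| + j + 1) := by positivity
    positivity
  have hsum : Summable v := by
    apply summable_of_ratio_test_tendsto_lt_one hr1
      (Filter.Eventually.of_forall fun n => (hvpos n).ne')
    have heq : ∀ n : ℕ, ((|p| + (n:ℝ) + 1)/((n:ℝ) + 1)) * (((n:ℝ) + 3)/((n:ℝ) + 2)) * r
        = ‖v (n+1)‖ / ‖v n‖ := by
      intro n
      rw [Real.norm_eq_abs, Real.norm_eq_abs, abs_of_pos (hvpos _), abs_of_pos (hvpos _), hv]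
      dsimp only
      rw [Finset.prod_range_succ, Nat.factorial_succ, pow_succ]
      have hP : 0 < ∏ j ∈ Finset.range n, (|p| + j + 1) := by positivity
      have hf : (0:ℝ) < (Nat.factorial n : ℝ) := by positivity
      push_cast
      have e1 : ((n:ℝ) + 1) ≠ 0 := by positivity
      have e2 : ((n:ℝ) + 2) ≠ 0 := by positivity
      field_simp
      ring
    refine Tendsto.congr heq ?_
    have h1 : Tendsto (fun n : ℕ => (|p| + (n:ℝ) + 1)/((n:ℝ) + 1)) atTop (𝓝 1) := by
      refine (tendsto_ratio_aux (|p| + 1) 1).congr fun n => ?_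
      congr 1; ring
    have h2 : Tendsto (fun n : ℕ => ((n:ℝ) + 3)/((n:ℝ) + 2)) atTop (𝓝 1) :=
      tendsto_ratio_aux 3 2
    have := (h1.mul h2).mul_const r
    simpa using this
  refine hsum.of_nonneg_of_le (fun n => by positivity) fun n => ?_
  rw [hv]; dsimp only
  have h1 := abs_bc_le p n
  have h2 : ((n:ℝ) + 1) ≤ ((n:ℝ) + 2) := by linarith
  have h3 : (0:ℝ) ≤ (∏ j ∈ Finset.range n, (|p| + j + 1)) / (Nat.factorial n : ℝ) := by
    have : 0 < ∏ j ∈ Finset.range n, (|p| + j + 1) := by positivity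
    positivity
  gcongr


lemma hasSum_binomial (p : ℝ) {x : ℝ} (hx : |x| < 1) :
    HasSum (fun n : ℕ => bc p n * x ^ n) ((1 + x) ^ p) := by
  obtain ⟨hx1, hx2⟩ := abs_lt.mp hx
  set r : ℝ := (1 + |x|) / 2 with hrdef
  have hxr : |x| < r := by rw [hrdef]; linarith
  have hr0 : 0 < r := lt_of_le_of_lt (abs_nonneg x) hxr
  have hr1 : r < 1 := by rw [hrdef]; linarith
  have hmaster := summable_master p r hr0 hr1
  set t : Set ℝ := Set.Ioo (-r) r with ht
  have hxt : x ∈ t := by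
    constructor
    · linarith [neg_abs_le x]
    · exact lt_of_le_of_lt (le_abs_self x) hxr
  have h0t : (0:ℝ) ∈ t := ⟨by linarith, hr0⟩
  -- summability on t
  have hsum : ∀ y ∈ t, Summable (fun n : ℕ => bc p n * y ^ n) := by
    intro y hy
    refine Summable.of_norm_bounded hmaster fun n => ?_
    have hyr : |y| ≤ r := le_of_lt (abs_lt.mpr ⟨hy.1, hy.2⟩)
    have hn : (0:ℝ) ≤ (n:ℝ) := Nat.cast_nonneg n
    rw [norm_mul, Real.norm_eq_abs, Real.norm_eq_abs, abs_pow]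
    calc |bc p n| * |y| ^ n ≤ |bc p n| * r ^ n := by gcongr
      _ = 1 * (|bc p n| * r ^ n) := by ring
      _ ≤ ((n:ℝ) + 1) * (|bc p n| * r ^ n) :=
          mul_le_mul_of_nonneg_right (by linarith) (by positivity)
      _ = |bc p n| * ((n:ℝ) + 1) * r ^ n := by ring
  -- the summable bound for the derivative series
  set u : ℕ → ℝ := fun n => |bc p n| * ((n:ℝ) + 1) * r ^ n / r with hu
  have husum : Summable u := hmaster.div_const r
  have hbound : ∀ (n : ℕ), ∀ y ∈ t, ‖bc p n * ((n:ℝ) * y ^ (n - 1))‖ ≤ u n := by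
    intro n y hy
    have hyr : |y| ≤ r := le_of_lt (abs_lt.mpr ⟨hy.1, hy.2⟩)
    rw [hu]
    cases n with
    | zero =>
        simp only [Nat.cast_zero, zero_mul, mul_zero, norm_zero]
        positivity
    | succ k =>
        dsimp only
        have hk : (0:ℝ) ≤ (k:ℝ) := Nat.cast_nonneg k
        rw [norm_mul, norm_mul, Real.norm_eq_abs, Real.norm_eq_abs, Real.norm_eq_abs, abs_pow]
        push_cast
        rw [abs_of_nonneg (by positivity : (0:ℝ) ≤ (k:ℝ) + 1)]
        have hrw : |bc p (k+1)| * ((k:ℝ) + 1 + 1) * r ^ (k+1) / r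
            = |bc p (k+1)| * ((k:ℝ) + 1 + 1) * r ^ k := by
          rw [pow_succ]; field_simp
        rw [hrw]
        calc |bc p (k+1)| * (((k:ℝ) + 1) * |y| ^ k)
            = ((k:ℝ) + 1) * (|bc p (k+1)| * |y| ^ k) := by ring
          _ ≤ ((k:ℝ) + 1) * (|bc p (k+1)| * r ^ k) := by gcongr
          _ ≤ ((k:ℝ) + 1 + 1) * (|bc p (k+1)| * r ^ k) :=
              mul_le_mul_of_nonneg_right (by linarith) (by positivity)
          _ = |bc p (k+1)| * ((k:ℝ) + 1 + 1) * r ^ k := by ring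
  -- termwise derivatives
  have hderiv : ∀ (n : ℕ), ∀ y ∈ t,
      HasDerivAt (fun z : ℝ => bc p n * z ^ n) (bc p n * ((n:ℝ) * y ^ (n - 1))) y :=
    fun n y _ => (hasDerivAt_pow n y).const_mul (bc p n)
  have hsum0 : Summable (fun n : ℕ => bc p n * (0:ℝ) ^ n) := hsum 0 h0t
  have hF : ∀ y ∈ t, HasDerivAt (fun z : ℝ => ∑' n : ℕ, bc p n * z ^ n)
      (∑' n : ℕ, bc p n * ((n:ℝ) * y ^ (n - 1))) y := by
    intro y hy
    exact hasDerivAt_tsum_of_isPreconnected husum isOpen_Ioo (convex_Ioo _ _).isPreconnected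
      hderiv hbound h0t hsum0 hy
  set F : ℝ → ℝ := fun y => ∑' n : ℕ, bc p n * y ^ n with hFdef
  set D : ℝ → ℝ := fun y => ∑' n : ℕ, bc p n * ((n:ℝ) * y ^ (n - 1)) with hDdef
  -- the ODE : (1+y) * D y = p * F y on t
  have hODE : ∀ y ∈ t, (1 + y) * D y = p * F y := by
    intro y hy
    have hsF : HasSum (fun n : ℕ => bc p n * y ^ n) (F y) := (hsum y hy).hasSum
    have hsDsummable : Summable (fun n : ℕ => bc p n * ((n:ℝ) * y ^ (n - 1))) :=
      Summable.of_norm_bounded husum (fun n => hbound n y hy)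
    have hsD : HasSum (fun n : ℕ => bc p n * ((n:ℝ) * y ^ (n - 1))) (D y) := hsDsummable.hasSum
    -- shift the derivative series
    have hsD' : HasSum (fun n : ℕ => bc p (n+1) * (((n:ℝ) + 1) * y ^ n)) (D y) := by
      have h := (hasSum_nat_add_iff
        (f := fun n : ℕ => bc p n * ((n:ℝ) * y ^ (n - 1))) 1).mpr (by simpa using hsD)
      simpa using h
    have hsD'' : HasSum (fun n : ℕ => (p - (n:ℝ)) * bc p n * y ^ n) (D y) := by
      have hfun : (fun n : ℕ => (p - (n:ℝ)) * bc p n * y ^ n)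
          = fun n : ℕ => bc p (n+1) * (((n:ℝ) + 1) * y ^ n) := by
        funext n
        rw [show bc p (n+1) * (((n:ℝ) + 1) * y ^ n) = (((n:ℝ) + 1) * bc p (n+1)) * y ^ n by ring,
          bc_succ_ratio]
      rw [hfun]
      exact hsD'
    have hsP : HasSum (fun n : ℕ => p * (bc p n * y ^ n)) (p * F y) := hsF.mul_left p
    have hsub : HasSum (fun n : ℕ => p * (bc p n * y ^ n) - (p - (n:ℝ)) * bc p n * y ^ n)
        (p * F y - D y) := hsP.sub hsD''
    have hsN : HasSum (fun n : ℕ => (bc p n * ((n:ℝ) * y ^ (n - 1))) * y) (p * F y - D y) := by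
      have hfun2 : (fun n : ℕ => (bc p n * ((n:ℝ) * y ^ (n - 1))) * y)
          = fun n : ℕ => p * (bc p n * y ^ n) - (p - (n:ℝ)) * bc p n * y ^ n := by
        funext n
        cases n with
        | zero => simp
        | succ k =>
            have hsub1 : (k + 1 : ℕ) - 1 = k := rfl
            rw [hsub1]
            push_cast
            ring
      rw [hfun2]
      exact hsub
    have hsDy : HasSum (fun n : ℕ => (bc p n * ((n:ℝ) * y ^ (n - 1))) * y) (D y * y) :=
      hsD.mul_right y
    have hDy : D y * y = p * F y - D y := hsDy.unique hsN
    linear_combination hDy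
  -- H := F * (1+·)^(-p) has zero derivative on t
  have hH : ∀ y ∈ t, HasDerivAt (fun z : ℝ => F z * (1 + z) ^ (-p)) 0 y := by
    intro y hy
    have h1y : 0 < 1 + y := by
      have h := hy.1
      simp only [ht, Set.mem_Ioo] at hy
      linarith [hy.1]
    have hrp : HasDerivAt (fun z : ℝ => (1 + z) ^ (-p)) (-p * (1 + y) ^ (-p - 1)) y := by
      have h := Real.hasDerivAt_rpow_const (x := 1 + y) (p := -p) (Or.inl (ne_of_gt h1y))
      have hc : HasDerivAt (fun z : ℝ => 1 + z) 1 y := (hasDerivAt_id y).const_add 1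
      have h2 := h.comp y hc; rw [mul_one] at h2; exact h2
    have hmul := (hF y hy).mul hrp
    have hkey : (1 + y) * D y = p * F y := hODE y hy
    have hsplit : (1 + y) ^ (-p) = (1 + y) ^ (-p - 1) * (1 + y) := by
      rw [show -p = -p - 1 + 1 by ring, Real.rpow_add_one (ne_of_gt h1y)]
      ring_nf
    have : D y * (1 + y) ^ (-p) + F y * (-p * (1 + y) ^ (-p - 1)) = 0 := by
      rw [hsplit]
      linear_combination (1 + y) ^ (-p - 1) * hkey
    rw [this] at hmul
    exact hmul
  -- constancy on the segment from 0 to x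
  have hsubset : Set.Icc (min x 0) (max x 0) ⊆ t := by
    intro z hz
    constructor
    · exact lt_of_lt_of_le (lt_min hxt.1 (by linarith : -r < 0)) hz.1
    · exact lt_of_le_of_lt hz.2 (max_lt hxt.2 hr0)
  have hcont : ContinuousOn (fun z : ℝ => F z * (1 + z) ^ (-p)) (Set.Icc (min x 0) (max x 0)) :=
    fun z hz => ((hH z (hsubset hz)).continuousAt).continuousWithinAt
  have hd0 : ∀ z ∈ Set.Ico (min x 0) (max x 0),
      HasDerivWithinAt (fun z : ℝ => F z * (1 + z) ^ (-p)) 0 (Set.Ici z) z :=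
    fun z hz => (hH z (hsubset ⟨hz.1, hz.2.le⟩)).hasDerivWithinAt
  have hconst := constant_of_has_deriv_right_zero hcont hd0
  have hx0 : F x * (1 + x) ^ (-p) = F 0 * (1 + 0) ^ (-p) := by
    have h1 := hconst x ⟨min_le_left _ _, le_max_left _ _⟩
    have h2 := hconst 0 ⟨min_le_right _ _, le_max_right _ _⟩
    rw [h1, h2]
  have hF0 : F 0 = 1 := by
    have h : F 0 = ∑' n : ℕ, bc p n * (0:ℝ) ^ n := rfl
    rw [h, tsum_eq_single 0 (fun n hn => by simp [zero_pow hn])]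
    simp [bc_zero]
  rw [hF0, one_mul] at hx0
  have h1x : (0:ℝ) < 1 + x := by linarith
  have hx0' : F x * (1 + x) ^ (-p) = 1 := by
    rw [hx0]; norm_num
  have hFx : F x = (1 + x) ^ p := by
    have hne : (1 + x) ^ (-p) ≠ 0 := (Real.rpow_pos_of_pos h1x _).ne'
    have : F x * (1 + x) ^ (-p) * (1 + x) ^ p = (1 + x) ^ p := by rw [hx0', one_mul]
    rwa [mul_assoc, ← Real.rpow_add h1x, neg_add_cancel, Real.rpow_zero, mul_one] at this
  exact hFx ▸ (hsum x hxt).hasSum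

lemma bc_shift (p : ℝ) (n : ℕ) :
    ((n : ℝ) + 1) * bc p (n + 1) = p * bc (p - 1) n := by
  unfold bc
  rw [Finset.prod_range_succ', Nat.factorial_succ]
  have h3 : (∏ j ∈ Finset.range n, (p - ((j + 1 : ℕ) : ℝ))) = ∏ j ∈ Finset.range n, ((p - 1) - j) := by
    refine Finset.prod_congr rfl fun j _ => ?_
    push_cast; ring
  rw [h3]
  have h1 : ((Nat.factorial n : ℝ)) ≠ 0 := Nat.cast_ne_zero.mpr (Nat.factorial_ne_zero n)
  have h2 : ((n : ℝ) + 1) ≠ 0 := by positivity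
  push_cast
  field_simp
  ring

/-- λ-falling factorial (x)_{n,λ} = x(x-λ)⋯(x-(n-1)λ). -/
noncomputable def dfall (lam x : ℝ) (n : ℕ) : ℝ := ∏ j ∈ Finset.range n, (x - j * lam)

/-- degenerate exponential e_λ(t) = (1+λt)^{1/λ}. -/
noncomputable def dexp (lam t : ℝ) : ℝ := (1 + lam * t) ^ (1 / lam)

/-- PMF of the degenerate zero-truncated Poisson random variable (for n ≥ 1). -/
noncomputable def ztP (lam a : ℝ) (n : ℕ) : ℝ :=
  1 / (dexp lam a - 1) * (a ^ n / (Nat.factorial n : ℝ)) * dfall lam 1 n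

theorem stmt4 (lam a : ℝ) (ha : 0 < a) (hne : lam ≠ -(1 / a)) (habs : |lam * a| < 1) :
    (∑' n : ℕ, ((n + 1 : ℕ) : ℝ) ^ 2 * ztP lam a (n + 1))
      - (∑' n : ℕ, ((n + 1 : ℕ) : ℝ) * ztP lam a (n + 1)) ^ 2
    = a * (1 + a) / (1 + a * lam) ^ 2 * (dexp lam a / (dexp lam a - 1))
      - (a / (1 + a * lam)) ^ 2 * (dexp lam a / (dexp lam a - 1)) ^ 2 := by
  rcases eq_or_ne lam 0 with h0 | h0
  · subst h0
    have hd : dexp 0 a = 1 := by unfold dexp; norm_num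
    have hz : ∀ n : ℕ, ztP 0 a n = 0 := by
      intro n; unfold ztP; rw [hd]; norm_num
    simp [hz, hd]
  · have hx : |lam * a| < 1 := habs
    have h1x : (0:ℝ) < 1 + lam * a := by
      have := (abs_lt.mp hx).1; linarith
    set p : ℝ := 1 / lam with hp
    set x : ℝ := lam * a with hxd
    set C : ℝ := (dexp lam a - 1)⁻¹ with hC
    have hfac : ∀ n : ℕ, ((Nat.factorial n : ℝ)) ≠ 0 :=
      fun n => Nat.cast_ne_zero.mpr (Nat.factorial_ne_zero n)
    have hz : ∀ n : ℕ, ztP lam a n = C * (bc p n * x ^ n) := by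
      intro n
      unfold ztP
      rw [one_div, ← hC, mul_assoc]
      congr 1
      unfold dfall bc
      rw [hxd, hp]
      have hprod : (∏ j ∈ Finset.range n, ((1:ℝ) - j * lam))
          = lam ^ n * ∏ j ∈ Finset.range n, (1 / lam - j) := by
        induction n with
        | zero => simp
        | succ k ih =>
            rw [Finset.prod_range_succ, Finset.prod_range_succ, ih, pow_succ]
            have hlk : lam * (1 / lam) = 1 := by field_simp
            linear_combination (-(lam ^ k * ∏ j ∈ Finset.range k, (1 / lam - (j:ℝ)))) * hlk
      rw [hprod, mul_pow]
      field_simp [hfac n]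
    have hB1 := hasSum_binomial (p - 1) hx
    have hB2 := hasSum_binomial (p - 2) hx
    -- first moment series
    have hS1 : HasSum (fun n : ℕ => ((n + 1 : ℕ) : ℝ) * ztP lam a (n + 1))
        ((C * p * x) * ((1 + x) ^ (p - 1))) := by
      have hfun : (fun n : ℕ => ((n + 1 : ℕ) : ℝ) * ztP lam a (n + 1))
          = fun n : ℕ => (C * p * x) * (bc (p - 1) n * x ^ n) := by
        funext n
        rw [hz (n + 1)]
        have hb := bc_shift p n
        push_cast
        linear_combination C * x ^ n * x * hb
      rw [hfun]
      exact hB1.mul_left _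
    -- second factorial moment series
    have hS2' : HasSum (fun n : ℕ => (((n + 1 : ℕ) : ℝ) + 1) * ((n + 1 : ℕ) : ℝ)
          * ztP lam a (n + 1 + 1))
        ((C * p * (p - 1) * x ^ 2) * ((1 + x) ^ (p - 2))) := by
      have hfun : (fun n : ℕ => (((n + 1 : ℕ) : ℝ) + 1) * ((n + 1 : ℕ) : ℝ)
            * ztP lam a (n + 1 + 1))
          = fun n : ℕ => (C * p * (p - 1) * x ^ 2) * (bc (p - 2) n * x ^ n) := by
        funext n
        rw [hz (n + 1 + 1)]
        have hb1 := bc_shift p (n + 1)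
        have hb2 := bc_shift (p - 1) n
        rw [show p - 1 - 1 = p - 2 by ring] at hb2
        push_cast at hb1 hb2 ⊢
        linear_combination (C * x ^ n * x * x * ((n:ℝ) + 1)) * hb1
          + (C * p * x ^ n * x * x) * hb2
      rw [hfun]
      exact hB2.mul_left _
    have hS2'' : HasSum (fun n : ℕ => (((n : ℕ) : ℝ) + 1) * ((n : ℕ) : ℝ) * ztP lam a (n + 1))
        ((C * p * (p - 1) * x ^ 2) * ((1 + x) ^ (p - 2))) := by
      have h := (hasSum_nat_add_iff
        (f := fun n : ℕ => (((n : ℕ) : ℝ) + 1) * ((n : ℕ) : ℝ) * ztP lam a (n + 1)) 1).mp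
        (by exact_mod_cast hS2')
      simpa using h
    have hS2 : HasSum (fun n : ℕ => ((n + 1 : ℕ) : ℝ) ^ 2 * ztP lam a (n + 1))
        ((C * p * (p - 1) * x ^ 2) * ((1 + x) ^ (p - 2))
          + (C * p * x) * ((1 + x) ^ (p - 1))) := by
      have h := hS2''.add hS1
      have hfun : (fun n : ℕ => ((n + 1 : ℕ) : ℝ) ^ 2 * ztP lam a (n + 1))
          = fun n : ℕ => (((n : ℕ) : ℝ) + 1) * ((n : ℕ) : ℝ) * ztP lam a (n + 1)
            + ((n + 1 : ℕ) : ℝ) * ztP lam a (n + 1) := by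
        funext n; push_cast; ring
      rw [hfun]
      exact h
    rw [hS2.tsum_eq, hS1.tsum_eq]
    have hdivC : dexp lam a / (dexp lam a - 1) = dexp lam a * C := by
      rw [hC, div_eq_mul_inv]
    rw [hdivC]
    have hde : dexp lam a = (1 + x) ^ p := by
      unfold dexp; rw [hxd, hp]
    have hne1 : (1:ℝ) + x ≠ 0 := ne_of_gt h1x
    have he2 : (1 + x) ^ (p - 1) = (1 + x) ^ (p - 2) * (1 + x) := by
      rw [show p - 1 = p - 2 + 1 by ring, Real.rpow_add_one hne1]
    have he : (1 + x) ^ p = (1 + x) ^ (p - 2) * (1 + x) * (1 + x) := by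
      nth_rewrite 1 [show p = p - 2 + 1 + 1 by ring]
      rw [Real.rpow_add_one hne1, Real.rpow_add_one hne1]
    rw [hde, he, he2]
    set E2 : ℝ := (1 + x) ^ (p - 2) with hE2
    rw [hp, hxd]
    have hne2 : (1:ℝ) + a * lam ≠ 0 := by
      rw [mul_comm]; rw [hxd] at h1x; exact ne_of_gt h1x
    have hne3 : (1:ℝ) + lam * a ≠ 0 := hne1
    field_simp
    ring
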